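/- Let λ₁ ∈ ℝ be fixed and (λ^{(J)})_{J} a family of vectors λ^{(J)} ∈ ℝ^J such that (Σ_j |λ^{(J)}_j|)/‖λ^{(J)}‖₂² → 0 as J → ∞. Then for all sufficiently large J, the equation Σ_j (λ^{(J)}_j)² − λ₁ Σ_j λ^{(J)}_j + 1/σ² = 0 fails; i.e., eventually ‖λ^{(J)}‖₂² − λ₁ Σ_j λ^{(J)}_j + 1/σ² > 0. -/
import Mathlib


open Filter

/-- If `(Σ_j |λ_j|)/‖λ‖₂² → 0` as `J → ∞`, then for all sufficiently large `J`
the characterization equation fails: `‖λ‖₂² − λ₁ Σ_j λ_j + 1/σ² > 0`. -/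
theorem no_fixed_lambda1_characterization (σ : ℝ) (hσ : 0 < σ) (lam1 : ℝ)
    (lam : (J : ℕ) → Fin J → ℝ)
    (h : Tendsto (fun J => (∑ j, |lam J j|) / (∑ j, (lam J j) ^ 2)) atTop (nhds 0)) :
    ∀ᶠ J in atTop,
      (∑ j, (lam J j) ^ 2) - lam1 * (∑ j, lam J j) + 1 / σ ^ 2 > 0 := by
  have hεpos : (0:ℝ) < 1 / (|lam1| + 1) := by positivity
  have hev := h.eventually (eventually_lt_nhds hεpos)
  filter_upwards [hev] with J hJ
  set S := ∑ j, (lam J j) ^ 2 with hSdef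
  set A := ∑ j, |lam J j| with hAdef
  have hS0 : 0 ≤ S := Finset.sum_nonneg fun j _ => sq_nonneg _
  have hA0 : 0 ≤ A := Finset.sum_nonneg fun j _ => abs_nonneg _
  have hsig : 0 < 1 / σ ^ 2 := by positivity
  rcases eq_or_lt_of_le hS0 with hS | hS
  · -- S = 0 forces each lam J j = 0
    have hz : ∀ j ∈ Finset.univ, (lam J j) ^ 2 = 0 := by
      intro j _
      exact (Finset.sum_eq_zero_iff_of_nonneg (fun j _ => sq_nonneg _)).mp hS.symm j
        (Finset.mem_univ j)
    have hsum : (∑ j, lam J j) = 0 := by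
      apply Finset.sum_eq_zero
      intro j _
      exact pow_eq_zero_iff (n := 2) (by norm_num) |>.mp (hz j (Finset.mem_univ j))
    rw [← hS, hsum]
    simpa using hsig
  · have hA : A < S / (|lam1| + 1) := by
      have := (div_lt_iff₀ hS).mp hJ
      calc A < (1 / (|lam1| + 1)) * S := this
        _ = S / (|lam1| + 1) := by ring
    have habs : |lam1 * (∑ j, lam J j)| ≤ |lam1| * A := by
      rw [abs_mul]
      exact mul_le_mul_of_nonneg_left
        (Finset.abs_sum_le_sum_abs _ _) (abs_nonneg _)
    have hmul : |lam1| * A < S := by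
      calc |lam1| * A ≤ (|lam1| + 1) * A := by nlinarith
        _ < (|lam1| + 1) * (S / (|lam1| + 1)) := by
            apply mul_lt_mul_of_pos_left hA (by positivity)
        _ = S := by field_simp
    have : lam1 * (∑ j, lam J j) < S := lt_of_le_of_lt (le_abs_self _) (lt_of_le_of_lt habs hmul)
    linarith
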